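/- arXiv:1411.1179 — 6 statements merged into one kernel-verified Lean document; each statement's English description precedes it below -/
import Mathlib

section
/- Let Z be standard normal and h: ℝ → ℝ continuous with E|h(Z)| < ∞. Define f_h by f_h(x) = e^{x²/2} ∫_{-∞}^{x} (h(t) − E h(Z)) e^{-t²/2} dt. Then f_h is differentiable and satisfies f_h'(x) − x f_h(x) = h(x) − E h(Z) for all x ∈ ℝ. -/
open MeasureTheory ProbabilityTheory

theorem stein_equation_normal
    (h : ℝ → ℝ) (hcont : Continuous h)
    (hint : Integrable h (gaussianReal 0 1))
    (m : ℝ) (hm : m = ∫ x, h x ∂(gaussianReal 0 1))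
    (fh : ℝ → ℝ)
    (hfh : fh = fun x => Real.exp (x ^ 2 / 2) *
      ∫ t in Set.Iio x, (h t - m) * Real.exp (-t ^ 2 / 2)) :
    ∀ x : ℝ, HasDerivAt fh (h x - m + x * fh x) x := by
  intro x
  set g : ℝ → ℝ := fun t => (h t - m) * Real.exp (-t ^ 2 / 2) with hg
  have hgcont : Continuous g :=
    (hcont.sub continuous_const).mul (Real.continuous_exp.comp (by continuity))
  -- integrability of g
  have hpdf : Integrable (fun t => h t * (gaussianPDF 0 1 t).toReal) volume := by
    rw [gaussianReal_of_var_ne_zero _ one_ne_zero] at hint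
    exact (integrable_withDensity_iff (measurable_gaussianPDF 0 1)
      (Filter.Eventually.of_forall fun x => ENNReal.ofReal_lt_top)).mp hint
  have hpdf_eq : ∀ t : ℝ, (gaussianPDF 0 1 t).toReal
      = (Real.sqrt (2 * Real.pi))⁻¹ * Real.exp (-t ^ 2 / 2) := by
    intro t
    rw [gaussianPDF, ENNReal.toReal_ofReal (gaussianPDFReal_nonneg _ _ _), gaussianPDFReal]
    norm_num
  have hexp : Integrable (fun t : ℝ => Real.exp (-t ^ 2 / 2)) volume := by
    have := integrable_exp_neg_mul_sq (b := (1:ℝ)/2) (by norm_num)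
    convert this using 2 with t
    ring_nf
  have hgint : Integrable g volume := by
    have h1 : Integrable (fun t => Real.sqrt (2 * Real.pi) *
        (h t * (gaussianPDF 0 1 t).toReal)) volume := hpdf.const_mul _
    have h2 : Integrable (fun t : ℝ => m * Real.exp (-t ^ 2 / 2)) volume := hexp.const_mul m
    have := h1.sub h2
    convert this using 1
    funext t
    simp only [Pi.sub_apply]
    rw [hpdf_eq t]
    have hsq : Real.sqrt (2 * Real.pi) ≠ 0 := by
      positivity
    simp only [hg]
    field_simp
  -- rewrite the Iio integral
  have hG : ∀ y : ℝ, (∫ t in Set.Iio y, g t)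
      = (∫ t in Set.Iic (0:ℝ), g t) + ∫ t in (0:ℝ)..y, g t := by
    intro y
    rw [← integral_Iic_eq_integral_Iio,
      ← intervalIntegral.integral_Iic_sub_Iic hgint.integrableOn hgint.integrableOn]
    ring
  -- derivative of the integral part
  have hDI : HasDerivAt (fun y => ∫ t in Set.Iio y, g t) (g x) x := by
    have := (hgcont.integral_hasStrictDerivAt 0 x).hasDerivAt
    have h' : HasDerivAt (fun y => (∫ t in Set.Iic (0:ℝ), g t) + ∫ t in (0:ℝ)..y, g t)
        (g x) x := (this.const_add _)
    exact h'.congr_of_eventuallyEq (Filter.Eventually.of_forall hG)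
  -- derivative of exp(y^2/2)
  have hDE : HasDerivAt (fun y : ℝ => Real.exp (y ^ 2 / 2)) (Real.exp (x ^ 2 / 2) * x) x := by
    have h1 : HasDerivAt (fun y : ℝ => y ^ 2 / 2) x x := by
      have := (hasDerivAt_pow 2 x).div_const 2
      simpa using this
    exact h1.exp
  have hprod := hDE.mul hDI
  rw [hfh]
  convert hprod using 1
  · rfl
  · rfl
  · rfl
  have h1 : Real.exp (x ^ 2 / 2) * Real.exp (-x ^ 2 / 2) = 1 := by
    rw [← Real.exp_add]; ring_nf; exact Real.exp_zero
  have key : Real.exp (x ^ 2 / 2) * g x = h x - m := by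
    simp only [hg]
    rw [mul_left_comm, h1, mul_one]
  rw [key]
  ring
end

section
/- Let X₁,…,Xₙ be i.i.d. with E X₁ = 0, E X₁² = 1/n, β = n^{3/2} E|X₁|³ < ∞, and W_{n−1} = ∑_{i=1}^{n−1} Xᵢ. Then for all real a < b, P(a ≤ W_{n−1} ≤ b) ≤ (b − a) + 2β/√n. -/
open MeasureTheory ProbabilityTheory

noncomputable def steinClamp (a b δ y : ℝ) : ℝ := min (max y (a - δ)) (b + δ)

lemma steinClamp_mono (a b δ : ℝ) {y z : ℝ} (h : y ≤ z) :
    steinClamp a b δ y ≤ steinClamp a b δ z :=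
  min_le_min (max_le_max h le_rfl) le_rfl

lemma steinClamp_mem (a b δ y : ℝ) (hab : a ≤ b) (hδ : 0 ≤ δ) :
    a - δ ≤ steinClamp a b δ y ∧ steinClamp a b δ y ≤ b + δ :=
  ⟨le_min (le_max_right _ _) (by linarith), min_le_right _ _⟩

lemma steinClamp_nonneg_mul (a b δ w x : ℝ) :
    0 ≤ x * (steinClamp a b δ (w + x) - steinClamp a b δ w) := by
  rcases le_total x 0 with hx | hx
  · have := steinClamp_mono a b δ (show w + x ≤ w by linarith)
    nlinarith
  · have := steinClamp_mono a b δ (show w ≤ w + x by linarith)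
    nlinarith

lemma steinClamp_key (a b δ w x : ℝ) (hδ : 0 ≤ δ) (h1 : a ≤ w) (h2 : w ≤ b) :
    |x| * min |x| δ ≤ x * (steinClamp a b δ (w + x) - steinClamp a b δ w) := by
  have hw : steinClamp a b δ w = w := by
    rw [steinClamp, max_eq_left (by linarith), min_eq_left (by linarith)]
  rw [hw, steinClamp]
  rcases le_total x 0 with hx | hx
  · rcases le_total (w + x) (a - δ) with h | h
    · have hmin : min |x| δ = δ := min_eq_right (by rw [abs_of_nonpos hx]; linarith)
      rw [hmin, abs_of_nonpos hx, max_eq_right h,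
        min_eq_left (show a - δ ≤ b + δ by linarith)]
      nlinarith
    · rw [abs_of_nonpos hx, max_eq_left h,
        min_eq_left (show w + x ≤ b + δ by linarith)]
      have h3 : min (-x) δ ≤ -x := min_le_left _ _
      have h4 : 0 ≤ min (-x) δ := le_min (by linarith) hδ
      nlinarith
  · rw [max_eq_left (by linarith)]
    rcases le_total (w + x) (b + δ) with h | h
    · have h3 : min |x| δ ≤ |x| := min_le_left _ _
      have h4 : 0 ≤ min |x| δ := le_min (abs_nonneg x) hδ
      rw [abs_of_nonneg hx] at h3
      rw [min_eq_left h, abs_of_nonneg hx]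
      nlinarith
    · have hmin : min |x| δ = δ := min_eq_right (by rw [abs_of_nonneg hx]; linarith)
      rw [hmin, abs_of_nonneg hx, min_eq_right h]
      nlinarith

lemma steinClamp_lower (δ x : ℝ) (hδ : 0 < δ) :
    x ^ 2 - |x| ^ 3 / (2 * δ) ≤ |x| * min |x| δ := by
  have hx : 0 ≤ |x| := abs_nonneg x
  have hsq : x ^ 2 = |x| ^ 2 := (sq_abs x).symm
  rcases le_total |x| δ with h | h
  · rw [min_eq_left h, hsq]
    have : 0 ≤ |x| ^ 3 / (2 * δ) := by positivity
    nlinarith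
  · rw [min_eq_right h, hsq, sub_le_iff_le_add, ← sub_le_iff_le_add',
      le_div_iff₀ (by linarith : (0:ℝ) < 2 * δ)]
    nlinarith [mul_nonneg hx (sq_nonneg (|x| - δ)), mul_nonneg hx (mul_pos hδ hδ).le]

lemma abs_le_cube_add_one (x : ℝ) : |x| ≤ |x| ^ 3 + 1 := by
  have hx : 0 ≤ |x| := abs_nonneg x
  rcases le_total |x| 1 with h | h
  · nlinarith [pow_nonneg hx 3]
  · nlinarith [mul_nonneg (mul_nonneg hx (by linarith : (0:ℝ) ≤ |x| - 1))
      (by linarith : (0:ℝ) ≤ |x| + 1)]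

lemma sq_le_cube_add_one (x : ℝ) : x ^ 2 ≤ |x| ^ 3 + 1 := by
  have hx : 0 ≤ |x| := abs_nonneg x
  have hsq : x ^ 2 = |x| ^ 2 := (sq_abs x).symm
  rcases le_total |x| 1 with h | h
  · nlinarith [pow_nonneg hx 3]
  · nlinarith [mul_nonneg (mul_nonneg hx hx) (by linarith : (0:ℝ) ≤ |x| - 1)]

lemma stein_identDistrib_add {Ω : Type*} [MeasurableSpace Ω] {μ : Measure Ω} [IsFiniteMeasure μ]
    {f g f' g' : Ω → ℝ} (hf : Measurable f) (hg : Measurable g)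
    (hf' : Measurable f') (hg' : Measurable g')
    (hind : IndepFun f g μ) (hind' : IndepFun f' g' μ)
    (h1 : IdentDistrib f f' μ μ) (h2 : IdentDistrib g g' μ μ) :
    IdentDistrib (f + g) (f' + g') μ μ := by
  refine ⟨(hf.add hg).aemeasurable, (hf'.add hg').aemeasurable, ?_⟩
  have e1 := (indepFun_iff_map_prod_eq_prod_map_map hf.aemeasurable hg.aemeasurable).1 hind
  have e2 := (indepFun_iff_map_prod_eq_prod_map_map hf'.aemeasurable hg'.aemeasurable).1 hind'
  have hc : (f + g) = (fun p : ℝ × ℝ => p.1 + p.2) ∘ (fun ω => (f ω, g ω)) := rfl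
  have hc' : (f' + g') = (fun p : ℝ × ℝ => p.1 + p.2) ∘ (fun ω => (f' ω, g' ω)) := rfl
  rw [hc, hc', ← Measure.map_map measurable_add (hf.prodMk hg),
    ← Measure.map_map measurable_add (hf'.prodMk hg'), e1, e2, h1.map_eq, h2.map_eq]

lemma stein_measurable_sum {Ω : Type*} [MeasurableSpace Ω] {n : ℕ} {X : Fin n → Ω → ℝ}
    (hmeas : ∀ i, Measurable (X i)) (s : Finset (Fin n)) :
    Measurable (∑ j ∈ s, X j) := by
  have : (∑ j ∈ s, X j) = fun ω => ∑ j ∈ s, X j ω := by ext ω; simp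
  rw [this]
  exact Finset.measurable_sum s fun i _ => hmeas i

lemma stein_identDistrib_sum {Ω : Type*} [MeasurableSpace Ω] {μ : Measure Ω}
    [IsProbabilityMeasure μ] {n : ℕ} {X : Fin n → Ω → ℝ}
    (hmeas : ∀ i, Measurable (X i))
    (hindep : iIndepFun X μ)
    (hident : ∀ i j, IdentDistrib (X i) (X j) μ μ) :
    ∀ (k : ℕ) (s t : Finset (Fin n)), s.card = k → t.card = k →
      IdentDistrib (∑ j ∈ s, X j) (∑ j ∈ t, X j) μ μ := by
  intro k
  induction k with
  | zero =>
    intro s t hs ht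
    rw [Finset.card_eq_zero] at hs ht
    subst hs; subst ht
    simp only [Finset.sum_empty]
    exact IdentDistrib.refl aemeasurable_const
  | succ k ih =>
    intro s t hs ht
    obtain ⟨i, hi⟩ : s.Nonempty := Finset.card_pos.1 (by omega)
    obtain ⟨j, hj⟩ : t.Nonempty := Finset.card_pos.1 (by omega)
    have hsum_s : ∑ m ∈ s, X m = (∑ m ∈ s.erase i, X m) + X i :=
      (Finset.sum_erase_add _ _ hi).symm
    have hsum_t : ∑ m ∈ t, X m = (∑ m ∈ t.erase j, X m) + X j :=
      (Finset.sum_erase_add _ _ hj).symm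
    rw [hsum_s, hsum_t]
    exact stein_identDistrib_add (stein_measurable_sum hmeas _) (hmeas i)
      (stein_measurable_sum hmeas _) (hmeas j)
      (hindep.indepFun_finset_sum_of_notMem hmeas (Finset.notMem_erase i s))
      (hindep.indepFun_finset_sum_of_notMem hmeas (Finset.notMem_erase j t))
      (ih _ _ (by rw [Finset.card_erase_of_mem hi]; omega)
        (by rw [Finset.card_erase_of_mem hj]; omega))
      (hident i j)

theorem stein_concentration_inequality
    {Ω : Type*} [MeasurableSpace Ω] (μ : Measure Ω) [IsProbabilityMeasure μ]
    (n : ℕ) (hn : 0 < n) (X : Fin n → Ω → ℝ)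
    (hmeas : ∀ i, Measurable (X i))
    (hindep : iIndepFun X μ)
    (hident : ∀ i j, IdentDistrib (X i) (X j) μ μ)
    (hmean : ∀ i, ∫ ω, X i ω ∂μ = 0)
    (hvar : ∀ i, ∫ ω, (X i ω) ^ 2 ∂μ = 1 / n)
    (h3 : ∀ i, Integrable (fun ω => |X i ω| ^ 3) μ)
    (β : ℝ) (hβ : β = (n : ℝ) ^ ((3 : ℝ) / 2) * ∫ ω, |X ⟨0, hn⟩ ω| ^ 3 ∂μ)
    (Wn1 : Ω → ℝ)
    (hWn1 : Wn1 = fun ω => ∑ i ∈ Finset.univ.filter (fun i : Fin n => (i : ℕ) < n - 1), X i ω)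
    (a b : ℝ) (hab : a < b) :
    (μ {ω | a ≤ Wn1 ω ∧ Wn1 ω ≤ b}).toReal ≤ (b - a) + 2 * β / Real.sqrt n := by
  classical
  set c3 : ℝ := ∫ ω, |X ⟨0, hn⟩ ω| ^ 3 ∂μ with hc3
  -- positivity of the third absolute moment
  have hnR : (0:ℝ) < n := by exact_mod_cast hn
  have hc3pos : 0 < c3 := by
    have hge : 0 ≤ c3 := integral_nonneg fun ω => by positivity
    rcases hge.lt_or_eq with h | h
    · exact h
    · exfalso
      have hz := (integral_eq_zero_iff_of_nonneg
        (fun ω => by positivity) (h3 ⟨0, hn⟩)).1 h.symm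
      have hzero : ∫ ω, (X ⟨0, hn⟩ ω) ^ 2 ∂μ = 0 := by
        apply integral_eq_zero_of_ae
        filter_upwards [hz] with ω hω
        simp only [Pi.zero_apply] at hω
        have hx0 : X ⟨0, hn⟩ ω = 0 :=
          abs_eq_zero.1 ((pow_eq_zero_iff (by norm_num : (3:ℕ) ≠ 0)).1 hω)
        simp [hx0]
      rw [hvar] at hzero
      have : (1:ℝ)/n ≠ 0 := by positivity
      exact this hzero
  set δ : ℝ := n * c3 with hδdef
  have hδpos : 0 < δ := by positivity
  set M : ℝ := (b - a) / 2 + δ with hMdef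
  have hMpos : 0 < M := by rw [hMdef]; linarith
  set g : ℝ → ℝ := fun y => steinClamp a b δ y - (a + b) / 2 with hgdef
  have gmeas : Measurable g := by
    apply Measurable.sub _ measurable_const
    exact (measurable_id.max measurable_const).min measurable_const
  have gbdd : ∀ y, |g y| ≤ M := by
    intro y
    have h1 : a - δ ≤ min (max y (a-δ)) (b+δ) :=
      le_min (le_max_right y (a-δ)) (by linarith : a - δ ≤ b + δ)
    have h2 : min (max y (a-δ)) (b+δ) ≤ b + δ := min_le_right (max y (a-δ)) (b+δ)
    rw [abs_le]
    constructor <;> simp only [hgdef, hMdef, steinClamp] <;> [linarith; linarith]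
  -- basic integrability
  have hX1 : ∀ i, Integrable (X i) μ := by
    intro i
    refine Integrable.mono' ((h3 i).add (integrable_const 1))
      (hmeas i).aestronglyMeasurable (ae_of_all _ fun ω => ?_)
    simp only [Pi.add_apply]
    rw [Real.norm_eq_abs]
    exact abs_le_cube_add_one (X i ω)
  have hX2 : ∀ i, Integrable (fun ω => X i ω ^ 2) μ := by
    intro i
    refine Integrable.mono' ((h3 i).add (integrable_const 1))
      ((hmeas i).pow_const 2).aestronglyMeasurable (ae_of_all _ fun ω => ?_)
    simp only [Pi.add_apply]
    rw [Real.norm_eq_abs, abs_of_nonneg (sq_nonneg _)]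
    exact sq_le_cube_add_one (X i ω)
  have hm3 : ∀ i, ∫ ω, |X i ω| ^ 3 ∂μ = c3 := by
    intro i
    exact ((hident i ⟨0, hn⟩).comp ((measurable_id.abs).pow_const 3)).integral_eq
  -- definitions of sums
  set S : Ω → ℝ := fun ω => ∑ i, X i ω with hSdef
  set T : Fin n → Ω → ℝ := fun i ω => ∑ j ∈ Finset.univ.erase i, X j ω with hTdef
  have hTfun : ∀ i, T i = ∑ j ∈ Finset.univ.erase i, X j := by
    intro i; ext ω; simp [hTdef]
  have hTmeas : ∀ i, Measurable (T i) := fun i =>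
    Finset.measurable_sum _ fun j _ => hmeas j
  have hSmeas : Measurable S := Finset.measurable_sum _ fun j _ => hmeas j
  have hST : ∀ i ω, S ω = T i ω + X i ω := by
    intro i ω
    simp only [hSdef, hTdef]
    rw [Finset.sum_erase_add _ _ (Finset.mem_univ i)]
  have hTX : ∀ i, IndepFun (T i) (X i) μ := by
    intro i
    rw [hTfun i]
    exact hindep.indepFun_finset_sum_of_notMem hmeas (Finset.notMem_erase i _)
  -- second moment of S equals 1
  have hprod_int : ∀ i j : Fin n, Integrable (fun ω => X i ω * X j ω) μ := by
    intro i j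
    by_cases hij : i = j
    · subst hij
      have := hX2 i
      simpa [pow_two] using this
    · have := (hindep.indepFun hij).integrable_mul (hX1 i) (hX1 j)
      exact this
  have hS2 : ∫ ω, S ω ^ 2 ∂μ = 1 := by
    have hexp : ∀ ω, S ω ^ 2 = ∑ i, ∑ j, X i ω * X j ω := by
      intro ω
      simp only [hSdef]
      rw [pow_two, Finset.sum_mul_sum]
    calc ∫ ω, S ω ^ 2 ∂μ = ∫ ω, ∑ i, ∑ j, X i ω * X j ω ∂μ := by
          congr 1; ext ω; exact hexp ω
      _ = ∑ i, ∑ j, ∫ ω, X i ω * X j ω ∂μ := by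
          rw [integral_finset_sum _ fun i _ => integrable_finset_sum _ fun j _ => hprod_int i j]
          exact Finset.sum_congr rfl fun i _ => integral_finset_sum _ fun j _ => hprod_int i j
      _ = ∑ i : Fin n, (1:ℝ)/n := by
          refine Finset.sum_congr rfl fun i _ => ?_
          rw [Finset.sum_eq_single i]
          · simpa [pow_two] using hvar i
          · intro j _ hji
            calc ∫ ω, X i ω * X j ω ∂μ = integral μ (X i * X j) := rfl
              _ = (∫ ω, X i ω ∂μ) * ∫ ω, X j ω ∂μ :=
                (hindep.indepFun (Ne.symm hji)).integral_mul_eq_mul_integral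
                  (hX1 i).aestronglyMeasurable (hX1 j).aestronglyMeasurable
              _ = 0 := by rw [hmean i, hmean j, mul_zero]
          · intro h; exact absurd (Finset.mem_univ i) h
      _ = 1 := by
          rw [Finset.sum_const, Finset.card_univ, Fintype.card_fin, nsmul_eq_mul]
          field_simp
  have hSint : Integrable S μ := by
    have := integrable_finset_sum (μ := μ) Finset.univ (fun i (_ : i ∈ Finset.univ) => hX1 i)
    simpa [hSdef] using this
  have hS2int : Integrable (fun ω => S ω ^ 2) μ := by
    have : Integrable (fun ω => ∑ i, ∑ j, X i ω * X j ω) μ :=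
      integrable_finset_sum _ fun i _ => integrable_finset_sum _ fun j _ => hprod_int i j
    refine this.congr (ae_of_all _ fun ω => ?_)
    simp only [hSdef]
    rw [pow_two, Finset.sum_mul_sum]
  have hSabs : ∫ ω, |S ω| ∂μ ≤ 1 := by
    have hpt : ∀ ω, |S ω| ≤ (S ω ^ 2 + 1) / 2 := by
      intro ω; nlinarith [sq_nonneg (|S ω| - 1), sq_abs (S ω)]
    calc ∫ ω, |S ω| ∂μ ≤ ∫ ω, (S ω ^ 2 + 1) / 2 ∂μ :=
          integral_mono hSint.abs ((hS2int.add (integrable_const 1)).div_const 2) hpt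
      _ = ((∫ ω, S ω ^ 2 ∂μ) + 1) / 2 := by
          rw [integral_div, integral_add hS2int (integrable_const 1), integral_const]
          simp
      _ = 1 := by rw [hS2]; norm_num
  -- integrability of the g-composites
  have int_gT : ∀ i, Integrable (fun ω => g (T i ω)) μ := by
    intro i
    refine Integrable.mono' (integrable_const M)
      (gmeas.comp (hTmeas i)).aestronglyMeasurable (ae_of_all _ fun ω => ?_)
    rw [Real.norm_eq_abs]; exact gbdd _
  have int_XgS : ∀ i, Integrable (fun ω => X i ω * g (S ω)) μ := by
    intro i
    refine Integrable.mono' ((hX1 i).abs.mul_const M)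
      (((hmeas i).mul (gmeas.comp hSmeas)).aestronglyMeasurable) (ae_of_all _ fun ω => ?_)
    rw [Real.norm_eq_abs, abs_mul]
    exact mul_le_mul_of_nonneg_left (gbdd _) (abs_nonneg _)
  have int_XgT : ∀ i, Integrable (fun ω => X i ω * g (T i ω)) μ := by
    intro i
    refine Integrable.mono' ((hX1 i).abs.mul_const M)
      (((hmeas i).mul (gmeas.comp (hTmeas i))).aestronglyMeasurable) (ae_of_all _ fun ω => ?_)
    rw [Real.norm_eq_abs, abs_mul]
    exact mul_le_mul_of_nonneg_left (gbdd _) (abs_nonneg _)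
  -- the probability we want to bound
  set P : ℝ := (μ {ω | a ≤ Wn1 ω ∧ Wn1 ω ≤ b}).toReal with hPdef
  have hPnonneg : 0 ≤ P := ENNReal.toReal_nonneg
  -- each T i has the same distribution as Wn1
  have hTP : ∀ i, (μ (T i ⁻¹' Set.Icc a b)).toReal = P := by
    intro i
    have hlt : n - 1 < n := by omega
    set l : Fin n := ⟨n - 1, hlt⟩ with hl
    have hWT : Wn1 = T l := by
      rw [hWn1]
      funext ω
      simp only [hTdef]
      congr 1
      ext j
      simp only [Finset.mem_filter, Finset.mem_univ, true_and, Finset.mem_erase,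
        and_true, Ne, Fin.ext_iff, hl]
      have := j.isLt
      omega
    have hcard : ∀ m : Fin n, (Finset.univ.erase m).card = n - 1 := by
      intro m
      rw [Finset.card_erase_of_mem (Finset.mem_univ m), Finset.card_univ, Fintype.card_fin]
    have hid0 := stein_identDistrib_sum hmeas hindep hident (n - 1)
      (Finset.univ.erase i) (Finset.univ.erase l) (hcard i) (hcard l)
    have hid : IdentDistrib (T i) Wn1 μ μ := by
      rw [hWT, hTfun i, hTfun l]
      exact hid0
    have hset : {ω | a ≤ Wn1 ω ∧ Wn1 ω ≤ b} = Wn1 ⁻¹' Set.Icc a b := by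
      ext ω; simp [Set.mem_Icc]
    rw [hPdef, hset, hid.measure_mem_eq measurableSet_Icc]
  -- indicator and h functions
  set χ : ℝ → ℝ := (Set.Icc a b).indicator (fun _ => 1) with hχdef
  have χmeas : Measurable χ := measurable_const.indicator measurableSet_Icc
  have χ01 : ∀ t, χ t = 0 ∨ χ t = 1 := by
    intro t
    by_cases h : t ∈ Set.Icc a b <;> simp [hχdef, h]
  set F : ℝ → ℝ := fun x => |x| * min |x| δ with hFdef
  have Fmeas : Measurable F := (measurable_id.abs).mul ((measurable_id.abs).min measurable_const)
  have Fnonneg : ∀ x, 0 ≤ F x := fun x =>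
    mul_nonneg (abs_nonneg x) (le_min (abs_nonneg x) hδpos.le)
  have Fbdd : ∀ x, F x ≤ δ * |x| := by
    intro x
    show |x| * min |x| δ ≤ δ * |x|
    rw [mul_comm δ]
    exact mul_le_mul_of_nonneg_left (min_le_right _ _) (abs_nonneg x)
  have int_FX : ∀ i, Integrable (fun ω => F (X i ω)) μ := by
    intro i
    refine Integrable.mono' ((hX1 i).abs.const_mul δ)
      (Fmeas.comp (hmeas i)).aestronglyMeasurable (ae_of_all _ fun ω => ?_)
    rw [Real.norm_eq_abs, abs_of_nonneg (Fnonneg _)]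
    exact Fbdd _
  have int_χT : ∀ i, Integrable (fun ω => χ (T i ω)) μ := by
    intro i
    refine Integrable.mono' (integrable_const 1)
      (χmeas.comp (hTmeas i)).aestronglyMeasurable (ae_of_all _ fun ω => ?_)
    rcases χ01 (T i ω) with h | h <;> rw [Real.norm_eq_abs, h] <;> norm_num
  -- integral of F(X i) is at least 1/(2n)
  have hFlow : ∀ i, 1 / (2 * (n:ℝ)) ≤ ∫ ω, F (X i ω) ∂μ := by
    intro i
    have hpt : ∀ ω, X i ω ^ 2 - |X i ω| ^ 3 / (2 * δ) ≤ F (X i ω) := fun ω =>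
      steinClamp_lower δ (X i ω) hδpos
    have : ∫ ω, (X i ω ^ 2 - |X i ω| ^ 3 / (2 * δ)) ∂μ ≤ ∫ ω, F (X i ω) ∂μ :=
      integral_mono ((hX2 i).sub ((h3 i).div_const (2 * δ))) (int_FX i) hpt
    have hEq0 : ∫ ω, (X i ω ^ 2 - |X i ω| ^ 3 / (2 * δ)) ∂μ = 1 / (2 * (n:ℝ)) := by
      rw [integral_sub (hX2 i) ((h3 i).div_const (2 * δ)), integral_div, hvar i, hm3 i]
      rw [hδdef]
      field_simp
      ring
    linarith [hEq0 ▸ this]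
  -- the key lower bound on ∫ X i * g(S)
  have hkey : ∀ i, P * (1 / (2 * (n:ℝ))) ≤ ∫ ω, X i ω * g (S ω) ∂μ := by
    intro i
    have hgdiff : ∀ ω, g (S ω) - g (T i ω)
        = steinClamp a b δ (T i ω + X i ω) - steinClamp a b δ (T i ω) := by
      intro ω
      rw [hST i ω]
      simp only [hgdef]
      ring
    have hpt : ∀ ω, χ (T i ω) * F (X i ω) ≤ X i ω * (g (S ω) - g (T i ω)) := by
      intro ω
      rw [hgdiff ω]
      by_cases h : T i ω ∈ Set.Icc a b
      · have hχ : χ (T i ω) = 1 := by simp [hχdef, h]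
        rw [hχ, one_mul]
        exact steinClamp_key a b δ _ _ hδpos.le h.1 h.2
      · have hχ : χ (T i ω) = 0 := by simp [hχdef, h]
        rw [hχ, zero_mul]
        exact steinClamp_nonneg_mul a b δ _ _
    have intL : Integrable (fun ω => χ (T i ω) * F (X i ω)) μ := by
      refine Integrable.mono' ((hX1 i).abs.const_mul δ)
        (((χmeas.comp (hTmeas i)).mul (Fmeas.comp (hmeas i))).aestronglyMeasurable)
        (ae_of_all _ fun ω => ?_)
      rw [Real.norm_eq_abs, abs_mul]
      rcases χ01 (T i ω) with h | h
      · rw [h, abs_zero, zero_mul]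
        positivity
      · rw [h, abs_one, one_mul, abs_of_nonneg (Fnonneg _)]
        exact Fbdd _
    have intR : Integrable (fun ω => X i ω * (g (S ω) - g (T i ω))) μ := by
      refine ((int_XgS i).sub (int_XgT i)).congr (ae_of_all _ fun ω => ?_)
      simp only [Pi.sub_apply]
      ring
    have hmono : ∫ ω, χ (T i ω) * F (X i ω) ∂μ
        ≤ ∫ ω, X i ω * (g (S ω) - g (T i ω)) ∂μ :=
      integral_mono intL intR hpt
    have hR : ∫ ω, X i ω * (g (S ω) - g (T i ω)) ∂μ = ∫ ω, X i ω * g (S ω) ∂μ := by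
      simp_rw [mul_sub]
      rw [integral_sub (int_XgS i) (int_XgT i)]
      have hzero : ∫ ω, X i ω * g (T i ω) ∂μ = 0 := by
        have hI : IndepFun (g ∘ T i) (X i) μ := (hTX i).comp gmeas measurable_id
        calc ∫ ω, X i ω * g (T i ω) ∂μ = integral μ ((g ∘ T i) * X i) := by
              congr 1; ext ω; simp [mul_comm]
          _ = (∫ ω, g (T i ω) ∂μ) * ∫ ω, X i ω ∂μ :=
              hI.integral_mul_eq_mul_integral (int_gT i).aestronglyMeasurable (hX1 i).aestronglyMeasurable
          _ = 0 := by rw [hmean i, mul_zero]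
      rw [hzero, sub_zero]
    have hL : ∫ ω, χ (T i ω) * F (X i ω) ∂μ
        = (μ (T i ⁻¹' Set.Icc a b)).toReal * ∫ ω, F (X i ω) ∂μ := by
      have hI : IndepFun (χ ∘ T i) (F ∘ X i) μ := (hTX i).comp χmeas Fmeas
      have h1 : ∫ ω, χ (T i ω) * F (X i ω) ∂μ = integral μ ((χ ∘ T i) * (F ∘ X i)) := rfl
      rw [h1, hI.integral_mul_eq_mul_integral (int_χT i).aestronglyMeasurable (int_FX i).aestronglyMeasurable]
      congr 1
      have hptχ : ∀ ω, χ (T i ω) = (T i ⁻¹' Set.Icc a b).indicator (fun _ => (1:ℝ)) ω := by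
        intro ω
        by_cases h : T i ω ∈ Set.Icc a b <;> simp [hχdef, h]
      calc ∫ ω, (χ ∘ T i) ω ∂μ
          = ∫ ω, (T i ⁻¹' Set.Icc a b).indicator (fun _ => (1:ℝ)) ω ∂μ :=
            integral_congr_ae (ae_of_all _ fun ω => hptχ ω)
        _ = (μ (T i ⁻¹' Set.Icc a b)).toReal := by
            simp [integral_indicator_const (1:ℝ) ((hTmeas i) measurableSet_Icc), Measure.real_def]
    calc P * (1 / (2 * (n:ℝ)))
        ≤ P * ∫ ω, F (X i ω) ∂μ :=
          mul_le_mul_of_nonneg_left (hFlow i) hPnonneg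
      _ = ∫ ω, χ (T i ω) * F (X i ω) ∂μ := by rw [hL, hTP i]
      _ ≤ ∫ ω, X i ω * (g (S ω) - g (T i ω)) ∂μ := hmono
      _ = ∫ ω, X i ω * g (S ω) ∂μ := hR
  -- summation identity
  have hsum : ∫ ω, S ω * g (S ω) ∂μ = ∑ i, ∫ ω, X i ω * g (S ω) ∂μ := by
    rw [← integral_finset_sum _ fun i _ => int_XgS i]
    congr 1; ext ω
    simp only [hSdef]
    rw [← Finset.sum_mul]
  -- upper bound on ∫ S g(S)
  have hupper : ∫ ω, S ω * g (S ω) ∂μ ≤ M := by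
    have hpt : ∀ ω, S ω * g (S ω) ≤ |S ω| * M := by
      intro ω
      calc S ω * g (S ω) ≤ |S ω * g (S ω)| := le_abs_self _
        _ = |S ω| * |g (S ω)| := abs_mul _ _
        _ ≤ |S ω| * M := mul_le_mul_of_nonneg_left (gbdd _) (abs_nonneg _)
    have int_SgS : Integrable (fun ω => S ω * g (S ω)) μ := by
      refine Integrable.mono' (hSint.abs.mul_const M)
        ((hSmeas.mul (gmeas.comp hSmeas)).aestronglyMeasurable) (ae_of_all _ fun ω => ?_)
      rw [Real.norm_eq_abs, abs_mul]
      exact mul_le_mul_of_nonneg_left (gbdd _) (abs_nonneg _)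
    calc ∫ ω, S ω * g (S ω) ∂μ ≤ ∫ ω, |S ω| * M ∂μ :=
          integral_mono int_SgS (hSint.abs.mul_const M) hpt
      _ = (∫ ω, |S ω| ∂μ) * M := integral_mul_const M _
      _ ≤ 1 * M := mul_le_mul_of_nonneg_right hSabs hMpos.le
      _ = M := one_mul M
  -- combine
  have hlower : P / 2 ≤ ∫ ω, S ω * g (S ω) ∂μ := by
    rw [hsum]
    have : ∑ i : Fin n, P * (1 / (2 * (n:ℝ))) ≤ ∑ i, ∫ ω, X i ω * g (S ω) ∂μ :=
      Finset.sum_le_sum fun i _ => hkey i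
    have hval : ∑ i : Fin n, P * (1 / (2 * (n:ℝ))) = P / 2 := by
      rw [Finset.sum_const, Finset.card_univ, Fintype.card_fin, nsmul_eq_mul]
      field_simp
    linarith [hval ▸ this]
  have hPle : P ≤ (b - a) + 2 * δ := by
    have := le_trans hlower hupper
    rw [hMdef] at this
    linarith
  -- identify 2β/√n with 2δ
  have hfinal : 2 * β / Real.sqrt n = 2 * δ := by
    have hsqrt : Real.sqrt n > 0 := Real.sqrt_pos.2 hnR
    have h32 : ((n:ℝ)) ^ ((3:ℝ)/2) = n * Real.sqrt n := by
      have : ((3:ℝ)/2) = 1 + 1/2 := by norm_num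
      rw [this, Real.rpow_add hnR, Real.rpow_one, ← Real.sqrt_eq_rpow]
    rw [hβ, h32, hδdef]
    field_simp
  rw [hfinal]
  exact hPle
end

section
/- Let W be a random variable on the nonnegative integers such that E[λ f(W+1) − W f(W)] = 0 for every bounded function f: ℤ_{≥0} → ℝ. Then W has the Poisson distribution with mean λ. -/
open MeasureTheory

theorem poisson_characterization
    {Ω : Type*} [MeasurableSpace Ω] (μ : Measure Ω) [IsProbabilityMeasure μ]
    (l : ℝ) (hl : 0 < l) (W : Ω → ℕ) (hWm : Measurable W)
    (hWint : Integrable (fun ω => (W ω : ℝ)) μ)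
    (hstein : ∀ f : ℕ → ℝ, (∃ C, ∀ j, |f j| ≤ C) →
      ∫ ω, (l * f (W ω + 1) - (W ω : ℝ) * f (W ω)) ∂μ = 0) :
    ∀ k : ℕ, μ {ω | W ω = k} =
      ENNReal.ofReal (Real.exp (-l) * l ^ k / (Nat.factorial k)) := by
  set p : ℕ → ℝ := fun k => (μ {ω | W ω = k}).toReal with hp
  have hmeas : ∀ k : ℕ, MeasurableSet {ω | W ω = k} := fun k =>
    hWm (measurableSet_singleton k)
  have hfin : ∀ k : ℕ, μ {ω | W ω = k} ≠ ⊤ := fun k =>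
    (measure_lt_top μ _).ne
  -- Step 1: recurrence
  have hrec : ∀ k : ℕ, l * p k = (k + 1 : ℝ) * p (k + 1) := by
    intro k
    have hb : ∃ C, ∀ j, |(fun j => if j = k + 1 then (1 : ℝ) else 0) j| ≤ C := by
      refine ⟨1, fun j => ?_⟩
      by_cases h : j = k + 1 <;> simp [h]
    have h := hstein (fun j => if j = k + 1 then (1 : ℝ) else 0) hb
    have heq : (fun ω => (l * (if W ω + 1 = k + 1 then (1:ℝ) else 0)
        - (W ω : ℝ) * (if W ω = k + 1 then (1:ℝ) else 0)))
        = fun ω => Set.indicator {ω | W ω = k} (fun _ => l) ω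
          - Set.indicator {ω | W ω = k + 1} (fun _ => (k + 1 : ℝ)) ω := by
      funext ω
      by_cases h1 : W ω = k
      · by_cases h2 : W ω = k + 1 <;> simp [Set.indicator, h1, h2]
      · have h3 : W ω + 1 ≠ k + 1 := by omega
        by_cases h2 : W ω = k + 1 <;> simp [Set.indicator, h1, h2, h3]
    rw [heq] at h
    have hi1 : Integrable (Set.indicator {ω | W ω = k} (fun _ => l)) μ :=
      (integrable_const l).indicator (hmeas k)
    have hi2 : Integrable (Set.indicator {ω | W ω = k + 1} (fun _ => (k + 1 : ℝ))) μ :=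
      (integrable_const _).indicator (hmeas (k + 1))
    rw [integral_sub hi1 hi2, integral_indicator_const _ (hmeas k),
      integral_indicator_const _ (hmeas (k + 1)), sub_eq_zero] at h
    simpa [hp, smul_eq_mul, mul_comm, Measure.real] using h
  -- Step 2: closed form
  have hform : ∀ k : ℕ, p k = p 0 * l ^ k / (Nat.factorial k) := by
    intro k
    induction k with
    | zero => simp
    | succ n ih =>
      have h := hrec n
      have hn1 : ((n : ℝ) + 1) ≠ 0 := by positivity
      have : p (n + 1) = l * p n / ((n : ℝ) + 1) := by
        field_simp at h ⊢; linarith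
      rw [this, ih]
      rw [Nat.factorial_succ]
      push_cast
      field_simp
      ring
  -- Step 3: total mass
  have hsum : ∑' k : ℕ, p k = 1 := by
    have hdisj : Pairwise (Function.onFun Disjoint fun k : ℕ => {ω | W ω = k}) := by
      intro i j hij
      simp only [Function.onFun, Set.disjoint_left]
      rintro ω h1 h2
      exact hij (h1.symm.trans h2)
    have hU : (⋃ k : ℕ, {ω | W ω = k}) = Set.univ := by
      ext ω; simp
    have := measure_iUnion (μ := μ) hdisj hmeas
    rw [hU, measure_univ] at this
    have h2 : (∑' k : ℕ, μ {ω | W ω = k}).toReal = ∑' k, p k := by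
      exact ENNReal.tsum_toReal_eq hfin
    rw [← h2, ← this]
    simp
  -- Step 4: identify p 0
  have hexp : ∑' k : ℕ, p 0 * l ^ k / (Nat.factorial k) = p 0 * Real.exp l := by
    have : Real.exp l = ∑' n : ℕ, l ^ n / (Nat.factorial n) := by
      rw [Real.exp_eq_exp_ℝ, NormedSpace.exp_eq_tsum_div]
    rw [this, ← tsum_mul_left]
    congr 1; funext n; ring
  have hsum' : p 0 * Real.exp l = 1 := by
    rw [← hexp, ← hsum]
    exact tsum_congr fun k => (hform k).symm
  have hp0 : p 0 = Real.exp (-l) := by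
    have h := Real.exp_ne_zero l
    rw [Real.exp_neg]
    exact eq_inv_of_mul_eq_one_left hsum'
  intro k
  have : p k = Real.exp (-l) * l ^ k / (Nat.factorial k) := by
    rw [hform k, hp0]
  rw [← this, hp, ENNReal.ofReal_toReal (hfin k)]
end

section
/- Let X₁,…,Xₙ be independent Bernoulli random variables with P(Xᵢ = 1) = pᵢ, W = ∑ᵢ Xᵢ, λ = ∑ᵢ pᵢ, and Z ~ Po(λ). Then for any bounded function h: ℤ_{≥0} → ℝ, |E h(W) − E h(Z)| ≤ (∑ᵢ pᵢ²) · ‖Δf_h‖_∞, where f_h solves the Poisson Stein equation λf(w+1) − wf(w) = h(w) − Eh(Z) and Δf(j) = f(j+1) − f(j). -/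
open MeasureTheory ProbabilityTheory

lemma integrable_comp_bdd {Ω : Type*} [MeasurableSpace Ω] (μ : Measure Ω)
    [IsProbabilityMeasure μ] (T : Ω → ℕ) (hT : Measurable T) (N : ℕ)
    (hN : ∀ ω, T ω ≤ N) (g : ℕ → ℝ) : Integrable (fun ω => g (T ω)) μ := by
  refine (integrable_const (∑ k ∈ Finset.range (N+1), |g k|)).mono'
    (measurable_from_top.comp hT).aestronglyMeasurable
    (Filter.Eventually.of_forall fun ω => ?_)
  exact Finset.single_le_sum (f := fun k => |g k|) (fun k _ => abs_nonneg _)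
      (Finset.mem_range.mpr (Nat.lt_succ_of_le (hN ω)))

theorem chen_stein_bound
    {Ω : Type*} [MeasurableSpace Ω] (μ : Measure Ω) [IsProbabilityMeasure μ]
    (n : ℕ) (X : Fin n → Ω → ℕ) (p : Fin n → ℝ)
    (hmeas : ∀ i, Measurable (X i))
    (hindep : iIndepFun X μ)
    (h01 : ∀ i ω, X i ω ≤ 1)
    (hp : ∀ i, μ {ω | X i ω = 1} = ENNReal.ofReal (p i))
    (hp0 : ∀ i, 0 ≤ p i) (hp1 : ∀ i, p i ≤ 1)
    (l : ℝ) (hl : l = ∑ i, p i)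
    (W : Ω → ℕ) (hW : W = fun ω => ∑ i, X i ω)
    (h : ℕ → ℝ) (hhb : ∃ C, ∀ j, |h j| ≤ C)
    (m : ℝ) (hm : m = ∑' k : ℕ, h k * (Real.exp (-l) * l ^ k / (Nat.factorial k)))
    (f : ℕ → ℝ) (hf : ∀ w : ℕ, l * f (w + 1) - (w : ℝ) * f w = h w - m)
    (C : ℝ) (hC : ∀ j, |f (j + 1) - f j| ≤ C) :
    |(∫ ω, h (W ω) ∂μ) - m| ≤ (∑ i, p i ^ 2) * C := by
  classical
  have hC0 : 0 ≤ C := le_trans (abs_nonneg _) (hC 0)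
  set Wi : Fin n → Ω → ℕ := fun i ω => ∑ j ∈ Finset.univ.erase i, X j ω with hWidef
  have hWeq : ∀ i ω, W ω = X i ω + Wi i ω := by
    intro i ω
    rw [hW, hWidef]
    exact (Finset.add_sum_erase _ _ (Finset.mem_univ i)).symm
  have hWim : ∀ i, Measurable (Wi i) := fun i =>
    Finset.measurable_sum _ fun j _ => hmeas j
  have hWm : Measurable W := by
    rw [hW]; exact Finset.measurable_sum _ fun j _ => hmeas j
  have hWb : ∀ ω, W ω ≤ n := by
    intro ω
    rw [hW]
    calc ∑ i, X i ω ≤ ∑ _i : Fin n, 1 := Finset.sum_le_sum fun i _ => h01 i ω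
      _ = n := by simp
  have hWib : ∀ i ω, Wi i ω ≤ n := fun i ω =>
    le_trans (by rw [hWeq i ω]; exact Nat.le_add_left _ _) (hWb ω)
  -- cases for X i ω
  have hX01 : ∀ i ω, X i ω = 0 ∨ X i ω = 1 := fun i ω => by
    have := h01 i ω; omega
  -- E[X i] = p i
  have EXi : ∀ i, ∫ ω, (X i ω : ℝ) ∂μ = p i := by
    intro i
    have hset : MeasurableSet {ω | X i ω = 1} := hmeas i (measurableSet_singleton 1)
    have : (fun ω => (X i ω : ℝ)) =
        Set.indicator {ω | X i ω = 1} (fun _ => (1:ℝ)) := by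
      funext ω
      rcases hX01 i ω with h0 | h1
      · rw [h0, Set.indicator_of_notMem]
        · simp
        · simp [Set.mem_setOf_eq, h0]
      · rw [h1, Set.indicator_of_mem]
        · simp
        · exact h1
    rw [this, integral_indicator_const _ hset, measureReal_def, hp i, smul_eq_mul, mul_one,
      ENNReal.toReal_ofReal (hp0 i)]
  -- integrability of compositions
  have intW : ∀ g : ℕ → ℝ, Integrable (fun ω => g (W ω)) μ := fun g =>
    integrable_comp_bdd μ W hWm n hWb g
  have intWi : ∀ i (g : ℕ → ℝ), Integrable (fun ω => g (Wi i ω)) μ := fun i g =>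
    integrable_comp_bdd μ (Wi i) (hWim i) n (hWib i) g
  have intXW : ∀ i (g : ℕ → ℝ), Integrable (fun ω => (X i ω : ℝ) * g (W ω)) μ := by
    intro i g
    have hMeas : Measurable (fun ω => (X i ω : ℝ) * g (W ω)) :=
      (measurable_from_top.comp (hmeas i)).mul (measurable_from_top.comp hWm)
    refine (integrable_const (∑ k ∈ Finset.range (n+1), |g k|)).mono'
      hMeas.aestronglyMeasurable (Filter.Eventually.of_forall fun ω => ?_)
    have h1 : |(X i ω : ℝ)| ≤ 1 := by
      rw [abs_of_nonneg (by positivity)]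
      exact_mod_cast h01 i ω
    have h2 : |g (W ω)| ≤ ∑ k ∈ Finset.range (n+1), |g k| :=
      Finset.single_le_sum (f := fun k => |g k|) (fun k _ => abs_nonneg _)
        (Finset.mem_range.mpr (Nat.lt_succ_of_le (hWb ω)))
    calc |(X i ω : ℝ) * g (W ω)| = |(X i ω : ℝ)| * |g (W ω)| := abs_mul _ _
      _ ≤ 1 * (∑ k ∈ Finset.range (n+1), |g k|) := by
          apply mul_le_mul h1 h2 (abs_nonneg _) zero_le_one
      _ = _ := one_mul _
  -- key factorization
  have key : ∀ i (g : ℕ → ℝ),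
      ∫ ω, (X i ω : ℝ) * g (Wi i ω) ∂μ = p i * ∫ ω, g (Wi i ω) ∂μ := by
    intro i g
    have hWiX : IndepFun (Wi i) (X i) μ := by
      have := hindep.indepFun_finsetSum_of_notMem hmeas
        (Finset.notMem_erase i Finset.univ)
      rw [show Wi i = ∑ j ∈ Finset.univ.erase i, X j from
        funext fun ω => by simp [hWidef, Finset.sum_apply]]
      exact this
    have hInd : IndepFun (fun ω => (X i ω : ℝ)) (fun ω => g (Wi i ω)) μ :=
      (hWiX.symm).comp measurable_from_top measurable_from_top
    have := hInd.integral_mul_eq_mul_integral (measurable_from_top.comp (hmeas i)).aestronglyMeasurable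
      (measurable_from_top.comp (hWim i)).aestronglyMeasurable
    rw [show (fun ω => (X i ω : ℝ) * g (Wi i ω)) =
      (fun ω => (X i ω : ℝ)) * (fun ω => g (Wi i ω)) from rfl, this, EXi i]
  -- main identity
  have step : (∫ ω, h (W ω) ∂μ) - m =
      ∑ i, p i * ∫ ω, (f (X i ω + Wi i ω + 1) - f (Wi i ω + 1)) ∂μ := by
    have e1 : (∫ ω, h (W ω) ∂μ) - m
        = ∫ ω, (l * f (W ω + 1) - (W ω : ℝ) * f (W ω)) ∂μ := by
      rw [show (∫ ω, h (W ω) ∂μ) - m = ∫ ω, (h (W ω) - m) ∂μ by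
        rw [integral_sub (intW h) (integrable_const m), integral_const]; simp]
      congr 1; funext ω; rw [hf (W ω)]
    have e2 : ∫ ω, (l * f (W ω + 1) - (W ω : ℝ) * f (W ω)) ∂μ
        = l * (∫ ω, f (W ω + 1) ∂μ) - ∫ ω, (W ω : ℝ) * f (W ω) ∂μ := by
      rw [integral_sub ((intW (fun k => f (k+1))).const_mul l)
        (intW (fun k => (k:ℝ) * f k)), integral_const_mul]
    -- W f(W) term
    have e3 : ∫ ω, (W ω : ℝ) * f (W ω) ∂μ
        = ∑ i, p i * ∫ ω, f (Wi i ω + 1) ∂μ := by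
      have : (fun ω => (W ω : ℝ) * f (W ω)) =
          fun ω => ∑ i, (X i ω : ℝ) * f (W ω) := by
        funext ω
        rw [← Finset.sum_mul]
        congr 1
        rw [hW]; push_cast; ring
      rw [this, integral_finset_sum _ (fun i _ => intXW i f)]
      refine Finset.sum_congr rfl fun i _ => ?_
      have : (fun ω => (X i ω : ℝ) * f (W ω)) =
          fun ω => (X i ω : ℝ) * f (Wi i ω + 1) := by
        funext ω
        rcases hX01 i ω with h0 | h1
        · simp [h0]
        · rw [hWeq i ω, h1]; ring_nf
      rw [this, key i (fun k => f (k+1))]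
    -- l f(W+1) term
    have e4 : l * (∫ ω, f (W ω + 1) ∂μ)
        = ∑ i, p i * ∫ ω, f (X i ω + Wi i ω + 1) ∂μ := by
      rw [hl, Finset.sum_mul]
      refine Finset.sum_congr rfl fun i _ => ?_
      congr 1
      exact integral_congr_ae (Filter.Eventually.of_forall fun ω => by
        show f (W ω + 1) = f (X i ω + Wi i ω + 1)
        rw [hWeq i ω])
    rw [e1, e2, e3, e4, ← Finset.sum_sub_distrib]
    refine Finset.sum_congr rfl fun i _ => ?_
    rw [← mul_sub, ← integral_sub]
    · exact integrable_comp_bdd μ (fun ω => X i ω + Wi i ω + 1)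
        (((hmeas i).add (hWim i)).add measurable_const) (n + 2)
        (fun ω => show X i ω + Wi i ω + 1 ≤ n + 2 by
          have := h01 i ω; have := hWib i ω; omega) f
    · exact integrable_comp_bdd μ (fun ω => Wi i ω + 1)
        ((hWim i).add measurable_const) (n + 1)
        (fun ω => show Wi i ω + 1 ≤ n + 1 by have := hWib i ω; omega) f
  -- bound
  rw [step]
  have bnd : ∀ i : Fin n,
      |∫ ω, (f (X i ω + Wi i ω + 1) - f (Wi i ω + 1)) ∂μ| ≤ C * p i := by
    intro i
    have hptw : ∀ ω, |f (X i ω + Wi i ω + 1) - f (Wi i ω + 1)| ≤ C * (X i ω : ℝ) := by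
      intro ω
      rcases hX01 i ω with h0 | h1
      · simp [h0]
      · have e : X i ω + Wi i ω + 1 = (Wi i ω + 1) + 1 := by omega
        rw [e, h1]
        simpa using hC (Wi i ω + 1)
    have hint1 : Integrable (fun ω =>
        |f (X i ω + Wi i ω + 1) - f (Wi i ω + 1)|) μ := by
      have hMeas : Measurable (fun ω => |f (X i ω + Wi i ω + 1) - f (Wi i ω + 1)|) := by
        apply Measurable.abs
        exact (measurable_from_top.comp (((hmeas i).add (hWim i)).add measurable_const)).sub
          (measurable_from_top.comp ((hWim i).add measurable_const))
      refine (integrable_const C).mono' hMeas.aestronglyMeasurable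
        (Filter.Eventually.of_forall fun ω => ?_)
      rw [Real.norm_eq_abs, abs_abs]
      refine le_trans (hptw ω) ?_
      have : (X i ω : ℝ) ≤ 1 := by exact_mod_cast h01 i ω
      nlinarith [Nat.cast_nonneg (α := ℝ) (X i ω)]
    have hint2 : Integrable (fun ω => C * (X i ω : ℝ)) μ := by
      have : (fun ω => C * (X i ω : ℝ)) = fun ω => (fun k : ℕ => C * k) (X i ω) := rfl
      rw [this]
      exact integrable_comp_bdd μ (X i) (hmeas i) 1 (h01 i) (fun k => C * k)
    calc |∫ ω, (f (X i ω + Wi i ω + 1) - f (Wi i ω + 1)) ∂μ|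
        ≤ ∫ ω, |f (X i ω + Wi i ω + 1) - f (Wi i ω + 1)| ∂μ := by
          simpa [Real.norm_eq_abs] using
            norm_integral_le_integral_norm (μ := μ)
              (fun ω => f (X i ω + Wi i ω + 1) - f (Wi i ω + 1))
      _ ≤ ∫ ω, C * (X i ω : ℝ) ∂μ :=
          integral_mono hint1 hint2 hptw
      _ = C * p i := by rw [integral_const_mul, EXi i]
  calc |∑ i, p i * ∫ ω, (f (X i ω + Wi i ω + 1) - f (Wi i ω + 1)) ∂μ|
      ≤ ∑ i, |p i * ∫ ω, (f (X i ω + Wi i ω + 1) - f (Wi i ω + 1)) ∂μ| :=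
        Finset.abs_sum_le_sum_abs _ _
    _ ≤ ∑ i, p i ^ 2 * C := by
        refine Finset.sum_le_sum fun i _ => ?_
        rw [abs_mul, abs_of_nonneg (hp0 i)]
        calc p i * |∫ ω, (f (X i ω + Wi i ω + 1) - f (Wi i ω + 1)) ∂μ|
            ≤ p i * (C * p i) := by
              apply mul_le_mul_of_nonneg_left (bnd i) (hp0 i)
          _ = p i ^ 2 * C := by ring
    _ = (∑ i, p i ^ 2) * C := by rw [Finset.sum_mul]
end

section
/- Let X₁,…,Xₙ be independent Bernoulli with parameters pᵢ, W = ∑ᵢ Xᵢ, λ = ∑ᵢ pᵢ. For any function f: ℤ_{≥0} → ℝ, E[λ Δf(W) − W Δf(W−1)] = ∑ᵢ pᵢ E[Xᵢ (Δ²f)(W − 1)], where Δf(j) = f(j+1) − f(j) and Δ²f = Δ(Δf). Consequently |E[λΔf(W) − WΔf(W−1)]| ≤ (∑ᵢ pᵢ²) ‖Δ²f‖_∞. -/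
open MeasureTheory ProbabilityTheory

lemma pgi_integrable_comp_nat {Ω : Type*} [MeasurableSpace Ω] (μ : Measure Ω)
    [IsProbabilityMeasure μ] {Y : Ω → ℕ} (hY : Measurable Y) (n : ℕ) (hb : ∀ ω, Y ω ≤ n)
    (g : ℕ → ℝ) : Integrable (fun ω => g (Y ω)) μ := by
  refine Integrable.mono' (integrable_const (∑ j ∈ Finset.range (n+1), |g j|))
    ((measurable_from_top.comp hY).aestronglyMeasurable) (Filter.Eventually.of_forall fun ω => ?_)
  calc ‖g (Y ω)‖ = |g (Y ω)| := rfl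
    _ ≤ ∑ j ∈ Finset.range (n+1), |g j| :=
      Finset.single_le_sum (f := fun j => |g j|) (fun j _ => abs_nonneg _)
        (Finset.mem_range.mpr (Nat.lt_succ_of_le (hb ω)))

lemma pgi_integral_bern {Ω : Type*} [MeasurableSpace Ω] (μ : Measure Ω)
    [IsProbabilityMeasure μ] {Xi : Ω → ℕ} (hXi : Measurable Xi) (h01 : ∀ ω, Xi ω ≤ 1)
    {pi : ℝ} (hpi : 0 ≤ pi) (hp : μ {ω | Xi ω = 1} = ENNReal.ofReal pi) :
    ∫ ω, (Xi ω : ℝ) ∂μ = pi := by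
  have heq : (fun ω => (Xi ω : ℝ)) = Set.indicator (Xi ⁻¹' {1}) (fun _ => (1:ℝ)) := by
    funext ω
    rcases Nat.le_one_iff_eq_zero_or_eq_one.mp (h01 ω) with h | h <;>
      simp [Set.indicator, h]
  have hp' : μ (Xi ⁻¹' {1}) = ENNReal.ofReal pi := hp
  rw [heq, integral_indicator_const _ (hXi (MeasurableSet.singleton 1)), measureReal_def, hp']
  simp [ENNReal.toReal_ofReal hpi]

lemma pgi_main {Ω : Type*} [MeasurableSpace Ω] (μ : Measure Ω) [IsProbabilityMeasure μ]
    (n : ℕ) (X : Fin n → Ω → ℕ) (p : Fin n → ℝ)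
    (hmeas : ∀ i, Measurable (X i))
    (hindep : iIndepFun X μ)
    (h01 : ∀ i ω, X i ω ≤ 1)
    (hp : ∀ i, μ {ω | X i ω = 1} = ENNReal.ofReal (p i))
    (hp0 : ∀ i, 0 ≤ p i)
    (W : Ω → ℕ) (hW : W = fun ω => ∑ i, X i ω)
    (g1 g2 : ℕ → ℝ) (hg : ∀ j, g2 j = g1 (j+1) - g1 j) :
    ∫ ω, ((∑ i, p i) * g1 (W ω) - (W ω : ℝ) * g1 (W ω - 1)) ∂μ
      = ∑ i, p i * ∫ ω, (X i ω : ℝ) * g2 (W ω - 1) ∂μ := by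
  classical
  have hWmeas : Measurable W := by
    rw [hW]; exact Finset.measurable_sum _ fun i _ => hmeas i
  set Wi : Fin n → Ω → ℕ := fun i ω => ∑ j ∈ Finset.univ.erase i, X j ω with hWi
  have hWimeas : ∀ i, Measurable (Wi i) := fun i => Finset.measurable_sum _ fun j _ => hmeas j
  have hWeq : ∀ i ω, W ω = X i ω + Wi i ω := by
    intro i ω; rw [hW]; exact (Finset.add_sum_erase _ _ (Finset.mem_univ i)).symm
  have hWle : ∀ ω, W ω ≤ n := by
    intro ω; rw [hW]
    calc ∑ i, X i ω ≤ ∑ _i : Fin n, 1 := Finset.sum_le_sum fun i _ => h01 i ω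
      _ = n := by simp
  have hWile : ∀ i ω, Wi i ω ≤ n := by
    intro i ω
    refine le_trans ?_ (hWle ω)
    rw [hW]
    exact Finset.sum_le_sum_of_subset (Finset.erase_subset _ _)
  have hW1meas : Measurable (fun ω => W ω - 1) := (measurable_from_top (f := fun k => k - 1)).comp hWmeas
  have hW1le : ∀ ω, W ω - 1 ≤ n := fun ω => le_trans (Nat.sub_le _ _) (hWle ω)
  have hXmeasR : ∀ i, AEStronglyMeasurable (fun ω => (X i ω : ℝ)) μ := fun i =>
    (measurable_from_top.comp (hmeas i)).aestronglyMeasurable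
  have hXbdd : ∀ i, ∃ c : ℝ, ∀ ω, ‖(X i ω : ℝ)‖ ≤ c := fun i =>
    ⟨1, fun ω => by
      rw [Real.norm_eq_abs, abs_of_nonneg (by positivity)]
      exact_mod_cast h01 i ω⟩
  have intX : ∀ (i : Fin n) (g : ℕ → ℝ) (Y : Ω → ℕ), Measurable Y → (∀ ω, Y ω ≤ n) →
      Integrable (fun ω => (X i ω : ℝ) * g (Y ω)) μ := by
    intro i g Y hY hb
    exact (pgi_integrable_comp_nat μ hY n hb g).bdd_mul (hXmeasR i) (Filter.Eventually.of_forall (hXbdd i).choose_spec)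
  have intXi : ∀ i : Fin n, Integrable (fun ω => (X i ω : ℝ)) μ := by
    intro i
    simpa using intX i (fun _ => 1) W hWmeas hWle
  have hEX : ∀ i, ∫ ω, (X i ω : ℝ) ∂μ = p i := fun i =>
    pgi_integral_bern μ (hmeas i) (h01 i) (hp0 i) (hp i)
  -- independence step
  have hIndi : ∀ (i : Fin n) (g : ℕ → ℝ),
      ∫ ω, (X i ω : ℝ) * g (Wi i ω) ∂μ = p i * ∫ ω, g (Wi i ω) ∂μ := by
    intro i g
    have h1 : IndepFun (∑ j ∈ Finset.univ.erase i, X j) (X i) μ :=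
      hindep.indepFun_finsetSum_of_notMem hmeas (Finset.notMem_erase i _)
    have h2 : IndepFun (fun ω => (X i ω : ℝ)) (fun ω => g (Wi i ω)) μ := by
      have h3 := h1.symm.comp (φ := (Nat.cast : ℕ → ℝ)) (ψ := g)
        measurable_from_top measurable_from_top
      convert h3 using 1 <;> funext ω <;>
      simp [hWi, Function.comp, Finset.sum_apply]
    have := h2.integral_mul_eq_mul_integral (intXi i).aestronglyMeasurable
      (pgi_integrable_comp_nat μ (hWimeas i) n (hWile i) g).aestronglyMeasurable
    rw [hEX i] at this
    simpa [Pi.mul_apply] using this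
  have key : ∀ i : Fin n, ∫ ω, (p i * g1 (W ω) - (X i ω : ℝ) * g1 (W ω - 1)) ∂μ
      = p i * ∫ ω, (X i ω : ℝ) * g2 (W ω - 1) ∂μ := by
    intro i
    have hA : ∀ ω, (X i ω : ℝ) * g1 (W ω - 1) = (X i ω : ℝ) * g1 (Wi i ω) := by
      intro ω
      rcases Nat.le_one_iff_eq_zero_or_eq_one.mp (h01 i ω) with h | h
      · simp [h]
      · have hw : W ω = Wi i ω + 1 := by rw [hWeq i ω, h, add_comm]
        simp [hw, h]
    have hBC : ∀ ω, g1 (W ω) - g1 (Wi i ω) = (X i ω : ℝ) * g2 (W ω - 1) := by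
      intro ω
      rcases Nat.le_one_iff_eq_zero_or_eq_one.mp (h01 i ω) with h | h
      · have hw : W ω = Wi i ω := by rw [hWeq i ω, h, zero_add]
        simp [hw, h]
      · have hw : W ω = Wi i ω + 1 := by rw [hWeq i ω, h, add_comm]
        rw [hw]
        simp [h, hg]
    calc ∫ ω, (p i * g1 (W ω) - (X i ω : ℝ) * g1 (W ω - 1)) ∂μ
        = ∫ ω, (p i * g1 (W ω) - (X i ω : ℝ) * g1 (Wi i ω)) ∂μ := by
          congr 1; funext ω; rw [hA]
      _ = p i * ∫ ω, g1 (W ω) ∂μ - ∫ ω, (X i ω : ℝ) * g1 (Wi i ω) ∂μ := by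
          rw [integral_sub ((pgi_integrable_comp_nat μ hWmeas n hWle g1).const_mul _)
            (intX i g1 (Wi i) (hWimeas i) (hWile i)), integral_const_mul]
      _ = p i * ∫ ω, g1 (W ω) ∂μ - p i * ∫ ω, g1 (Wi i ω) ∂μ := by rw [hIndi i g1]
      _ = p i * ∫ ω, (g1 (W ω) - g1 (Wi i ω)) ∂μ := by
          rw [integral_sub (pgi_integrable_comp_nat μ hWmeas n hWle g1)
            (pgi_integrable_comp_nat μ (hWimeas i) n (hWile i) g1), mul_sub]
      _ = p i * ∫ ω, (X i ω : ℝ) * g2 (W ω - 1) ∂μ := by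
          congr 1; congr 1; funext ω; rw [hBC]
  have expand : ∀ ω, (∑ i, p i) * g1 (W ω) - (W ω : ℝ) * g1 (W ω - 1)
      = ∑ i, (p i * g1 (W ω) - (X i ω : ℝ) * g1 (W ω - 1)) := by
    intro ω
    rw [Finset.sum_sub_distrib, ← Finset.sum_mul, ← Finset.sum_mul]
    congr 2
    rw [hW]
    push_cast
    rfl
  calc ∫ ω, ((∑ i, p i) * g1 (W ω) - (W ω : ℝ) * g1 (W ω - 1)) ∂μ
      = ∫ ω, ∑ i, (p i * g1 (W ω) - (X i ω : ℝ) * g1 (W ω - 1)) ∂μ := by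
        congr 1; funext ω; rw [expand]
    _ = ∑ i, ∫ ω, (p i * g1 (W ω) - (X i ω : ℝ) * g1 (W ω - 1)) ∂μ :=
        integral_finset_sum _ fun i _ =>
          ((pgi_integrable_comp_nat μ hWmeas n hWle g1).const_mul _).sub
            (intX i g1 (fun ω => W ω - 1) hW1meas hW1le)
    _ = ∑ i, p i * ∫ ω, (X i ω : ℝ) * g2 (W ω - 1) ∂μ := Finset.sum_congr rfl fun i _ => key i

theorem poisson_generator_identity
    {Ω : Type*} [MeasurableSpace Ω] (μ : Measure Ω) [IsProbabilityMeasure μ]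
    (n : ℕ) (X : Fin n → Ω → ℕ) (p : Fin n → ℝ)
    (hmeas : ∀ i, Measurable (X i))
    (hindep : iIndepFun X μ)
    (h01 : ∀ i ω, X i ω ≤ 1)
    (hp : ∀ i, μ {ω | X i ω = 1} = ENNReal.ofReal (p i))
    (hp0 : ∀ i, 0 ≤ p i) (hp1 : ∀ i, p i ≤ 1)
    (l : ℝ) (hl : l = ∑ i, p i)
    (W : Ω → ℕ) (hW : W = fun ω => ∑ i, X i ω)
    (f : ℕ → ℝ) (C : ℝ)
    (hC : ∀ j : ℕ, |f (j + 2) - 2 * f (j + 1) + f j| ≤ C) :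
    (∫ ω, (l * (f (W ω + 1) - f (W ω)) - (W ω : ℝ) * (f (W ω) - f (W ω - 1))) ∂μ =
        ∑ i, p i * ∫ ω, (X i ω : ℝ) *
          (f (W ω - 1 + 2) - 2 * f (W ω - 1 + 1) + f (W ω - 1)) ∂μ) ∧
      |∫ ω, (l * (f (W ω + 1) - f (W ω)) - (W ω : ℝ) * (f (W ω) - f (W ω - 1))) ∂μ| ≤
        (∑ i, p i ^ 2) * C := by
  subst hl
  have hmain := pgi_main μ n X p hmeas hindep h01 hp hp0 W hW
    (fun j => f (j + 1) - f j) (fun j => f (j + 2) - 2 * f (j + 1) + f j)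
    (fun j => by ring)
  have hfix : ∀ ω, (W ω : ℝ) * (f (W ω - 1 + 1) - f (W ω - 1))
      = (W ω : ℝ) * (f (W ω) - f (W ω - 1)) := by
    intro ω
    rcases Nat.eq_zero_or_pos (W ω) with h | h
    · simp [h]
    · rw [Nat.sub_add_cancel h]
  have hmain2 : ∫ ω, ((∑ i, p i) * (f (W ω + 1) - f (W ω))
        - (W ω : ℝ) * (f (W ω) - f (W ω - 1))) ∂μ
      = ∑ i, p i * ∫ ω, (X i ω : ℝ) *
          (f (W ω - 1 + 2) - 2 * f (W ω - 1 + 1) + f (W ω - 1)) ∂μ := by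
    rw [← hmain]
    congr 1
    funext ω
    rw [hfix]
  refine ⟨hmain2, ?_⟩
  rw [hmain2]
  have hC0 : 0 ≤ C := le_trans (abs_nonneg _) (hC 0)
  -- setup integrability facts again
  have hWmeas : Measurable W := by
    rw [hW]; exact Finset.measurable_sum _ fun i _ => hmeas i
  have hWle : ∀ ω, W ω ≤ n := by
    intro ω; rw [hW]
    calc ∑ i, X i ω ≤ ∑ _i : Fin n, 1 := Finset.sum_le_sum fun i _ => h01 i ω
      _ = n := by simp
  have hW1meas : Measurable (fun ω => W ω - 1) :=
    (measurable_from_top (f := fun k => k - 1)).comp hWmeas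
  have hW1le : ∀ ω, W ω - 1 ≤ n := fun ω => le_trans (Nat.sub_le _ _) (hWle ω)
  have hXmeasR : ∀ i, AEStronglyMeasurable (fun ω => (X i ω : ℝ)) μ := fun i =>
    (measurable_from_top.comp (hmeas i)).aestronglyMeasurable
  have hXbdd : ∀ i, ∃ c : ℝ, ∀ ω, ‖(X i ω : ℝ)‖ ≤ c := fun i =>
    ⟨1, fun ω => by
      rw [Real.norm_eq_abs, abs_of_nonneg (by positivity)]
      exact_mod_cast h01 i ω⟩
  have intX : ∀ (i : Fin n) (g : ℕ → ℝ),
      Integrable (fun ω => (X i ω : ℝ) * g (W ω - 1)) μ := fun i g =>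
    (pgi_integrable_comp_nat μ hW1meas n hW1le g).bdd_mul (hXmeasR i) (Filter.Eventually.of_forall (hXbdd i).choose_spec)
  have intXc : ∀ i : Fin n, Integrable (fun ω => (X i ω : ℝ) * C) μ := by
    intro i
    simpa using intX i (fun _ => C)
  have hEX : ∀ i, ∫ ω, (X i ω : ℝ) ∂μ = p i := fun i =>
    pgi_integral_bern μ (hmeas i) (h01 i) (hp0 i) (hp i)
  have hIbound : ∀ i : Fin n,
      |∫ ω, (X i ω : ℝ) * (f (W ω - 1 + 2) - 2 * f (W ω - 1 + 1) + f (W ω - 1)) ∂μ|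
        ≤ p i * C := by
    intro i
    calc |∫ ω, (X i ω : ℝ) * (f (W ω - 1 + 2) - 2 * f (W ω - 1 + 1) + f (W ω - 1)) ∂μ|
        ≤ ∫ ω, (X i ω : ℝ) * |f (W ω - 1 + 2) - 2 * f (W ω - 1 + 1) + f (W ω - 1)| ∂μ :=
        by
          have h := norm_integral_le_integral_norm (μ := μ)
            (f := fun ω => (X i ω : ℝ) * (f (W ω - 1 + 2) - 2 * f (W ω - 1 + 1) + f (W ω - 1)))
          simpa [Real.norm_eq_abs] using h
      _ ≤ ∫ ω, (X i ω : ℝ) * C ∂μ := by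
          refine integral_mono (intX i (fun j => |f (j + 2) - 2 * f (j + 1) + f j|)) (intXc i)
            fun ω => mul_le_mul_of_nonneg_left (hC _) (by positivity)
      _ = p i * C := by rw [integral_mul_const, hEX i]
  calc |∑ i, p i * ∫ ω, (X i ω : ℝ) *
          (f (W ω - 1 + 2) - 2 * f (W ω - 1 + 1) + f (W ω - 1)) ∂μ|
      ≤ ∑ i, |p i * ∫ ω, (X i ω : ℝ) *
          (f (W ω - 1 + 2) - 2 * f (W ω - 1 + 1) + f (W ω - 1)) ∂μ| :=
        Finset.abs_sum_le_sum_abs _ _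
    _ ≤ ∑ i, p i * (p i * C) := by
        refine Finset.sum_le_sum fun i _ => ?_
        rw [abs_mul, abs_of_nonneg (hp0 i)]
        exact mul_le_mul_of_nonneg_left (hIbound i) (hp0 i)
    _ = (∑ i, p i ^ 2) * C := by rw [Finset.sum_mul]; exact Finset.sum_congr rfl fun i _ => by ring
end

section
/- Suppose W = ∑_{i=1}^n Xᵢ where each Xᵢ is Bernoulli(pᵢ), and for each i write W = Xᵢ + Yᵢ + W̃ᵢ with Yᵢ a nonnegative-integer-valued random variable. Let λ = ∑ᵢ pᵢ and Z ~ Po(λ). Then for any bounded h: ℤ_{≥0} → ℝ, |E h(W) − E h(Z)| ≤ ∑ᵢ (pᵢ² + pᵢ E Yᵢ + E(Xᵢ Yᵢ)) ‖Δf_h‖_∞ + ∑ᵢ E|E(Xᵢ | W̃ᵢ) − pᵢ| · ‖f_h‖_∞, where f_h solves the Poisson Stein equation λ f(w+1) − w f(w) = h(w) − E h(Z). -/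
open MeasureTheory ProbabilityTheory

private lemma step_bound (f : ℕ → ℝ) (C₁ : ℝ) (hC₁ : ∀ j, |f (j + 1) - f j| ≤ C₁) :
    ∀ (a b : ℕ), |f (a + b) - f a| ≤ C₁ * b := by
  intro a b
  induction b with
  | zero => simp
  | succ b ih =>
    have h1 : |f (a + (b+1)) - f a| ≤ |f ((a+b) + 1) - f (a+b)| + |f (a+b) - f a| := by
      have : f (a + (b+1)) - f a = (f ((a+b)+1) - f (a+b)) + (f (a+b) - f a) := by
        rw [show a + (b+1) = (a+b)+1 from rfl]; ring
      rw [this]; exact abs_add_le _ _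
    calc |f (a + (b+1)) - f a| ≤ C₁ + C₁ * b := le_trans h1 (add_le_add (hC₁ _) ih)
    _ = C₁ * (b+1 : ℕ) := by push_cast; ring

private lemma meas_comp {Ω : Type*} [MeasurableSpace Ω] {g : Ω → ℕ} (hg : Measurable g)
    (F : ℕ → ℝ) : Measurable fun ω => F (g ω) :=
  measurable_from_top.comp hg

theorem local_poisson_bound
    {Ω : Type*} [MeasurableSpace Ω] (μ : Measure Ω) [IsProbabilityMeasure μ]
    (n : ℕ) (X Y Wt : Fin n → Ω → ℕ) (p : Fin n → ℝ)
    (hXmeas : ∀ i, Measurable (X i)) (hYmeas : ∀ i, Measurable (Y i))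
    (hWtmeas : ∀ i, Measurable (Wt i))
    (h01 : ∀ i ω, X i ω ≤ 1)
    (hp : ∀ i, μ {ω | X i ω = 1} = ENNReal.ofReal (p i))
    (hp0 : ∀ i, 0 ≤ p i) (hp1 : ∀ i, p i ≤ 1)
    (W : Ω → ℕ) (hW : W = fun ω => ∑ i, X i ω)
    (hdecomp : ∀ i ω, W ω = X i ω + Y i ω + Wt i ω)
    (hYint : ∀ i, Integrable (fun ω => (Y i ω : ℝ)) μ)
    (hXYint : ∀ i, Integrable (fun ω => (X i ω : ℝ) * (Y i ω : ℝ)) μ)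
    (l : ℝ) (hl : l = ∑ i, p i)
    (h : ℕ → ℝ) (hhb : ∃ C, ∀ j, |h j| ≤ C)
    (m : ℝ) (hm : m = ∑' k : ℕ, h k * (Real.exp (-l) * l ^ k / (Nat.factorial k)))
    (f : ℕ → ℝ) (hf : ∀ w : ℕ, l * f (w + 1) - (w : ℝ) * f w = h w - m)
    (C₀ C₁ : ℝ) (hC₀ : ∀ j, |f j| ≤ C₀) (hC₁ : ∀ j, |f (j + 1) - f j| ≤ C₁) :
    |(∫ ω, h (W ω) ∂μ) - m| ≤
      (∑ i, (p i ^ 2 + p i * (∫ ω, (Y i ω : ℝ) ∂μ) +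
        ∫ ω, (X i ω : ℝ) * (Y i ω : ℝ) ∂μ)) * C₁ +
      (∑ i, ∫ ω,
        |(μ[fun ω => (X i ω : ℝ)|MeasurableSpace.comap (Wt i) inferInstance]) ω - p i| ∂μ) * C₀ := by
  obtain ⟨Ch, hCh⟩ := hhb
  have hC₀0 : 0 ≤ C₀ := le_trans (abs_nonneg _) (hC₀ 0)
  have hWmeas : Measurable W := by
    rw [hW]; exact Finset.measurable_sum _ fun i _ => hXmeas i
  -- bounded measurable functions are integrable
  have hbdint : ∀ (g : Ω → ℝ), AEStronglyMeasurable g μ → ∀ C : ℝ, (∀ ω, |g ω| ≤ C) →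
      Integrable g μ := fun g hg C hC =>
    (integrable_const C).mono' hg (ae_of_all _ fun ω => by simpa using hC ω)
  have habs_le : ∀ g : Ω → ℝ, |∫ ω, g ω ∂μ| ≤ ∫ ω, |g ω| ∂μ := fun g => by
    simpa [Real.norm_eq_abs] using norm_integral_le_integral_norm (μ := μ) g
  have hXb : ∀ i ω, |(X i ω : ℝ)| ≤ 1 := fun i ω => by
    rw [abs_of_nonneg (by positivity)]; exact_mod_cast h01 i ω
  have hXint : ∀ i, Integrable (fun ω => (X i ω : ℝ)) μ := fun i =>
    hbdint _ (meas_comp (hXmeas i) _).aestronglyMeasurable 1 (hXb i)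
  -- expectation of X i
  have hEX : ∀ i, ∫ ω, (X i ω : ℝ) ∂μ = p i := by
    intro i
    have hset : MeasurableSet {ω | X i ω = 1} := hXmeas i (measurableSet_singleton 1)
    have heq : (fun ω => (X i ω : ℝ)) = Set.indicator {ω | X i ω = 1} (fun _ => (1:ℝ)) := by
      funext ω
      by_cases hx : X i ω = 1
      · simp [Set.indicator_of_mem, hx]
      · have h0 : X i ω = 0 := by have := h01 i ω; omega
        simp [Set.indicator_of_notMem, hx, h0]
    rw [heq, integral_indicator_const _ hset, measureReal_def, hp i]
    simp [ENNReal.toReal_ofReal (hp0 i)]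
  -- the three summand functions
  set A : Fin n → Ω → ℝ := fun i ω => p i * (f (W ω + 1) - f (Wt i ω + 1)) with hA_def
  set B : Fin n → Ω → ℝ := fun i ω => (p i - (X i ω : ℝ)) * f (Wt i ω + 1) with hB_def
  set Cc : Fin n → Ω → ℝ := fun i ω => (X i ω : ℝ) * (f (Wt i ω + 1) - f (W ω)) with hC_def
  have hAint : ∀ i, Integrable (A i) μ := by
    intro i
    refine hbdint _ ?_ (p i * (C₀ + C₀)) fun ω => ?_
    · exact (measurable_const.mul ((meas_comp hWmeas (fun k => f (k+1))).sub
        (meas_comp (hWtmeas i) (fun k => f (k+1))))).aestronglyMeasurable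
    · calc |p i * (f (W ω + 1) - f (Wt i ω + 1))|
          = p i * |f (W ω + 1) - f (Wt i ω + 1)| := by
            rw [abs_mul, abs_of_nonneg (hp0 i)]
      _ ≤ p i * (C₀ + C₀) := by
          refine mul_le_mul_of_nonneg_left ?_ (hp0 i)
          calc |f (W ω + 1) - f (Wt i ω + 1)| ≤ |f (W ω + 1)| + |f (Wt i ω + 1)| :=
            abs_sub _ _
          _ ≤ C₀ + C₀ := add_le_add (hC₀ _) (hC₀ _)
  have hBint : ∀ i, Integrable (B i) μ := by
    intro i
    refine hbdint _ ?_ ((p i + 1) * C₀) fun ω => ?_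
    · exact ((measurable_const.sub (meas_comp (hXmeas i) (fun k => (k:ℝ)))).mul
        (meas_comp (hWtmeas i) (fun k => f (k+1)))).aestronglyMeasurable
    · calc |(p i - (X i ω : ℝ)) * f (Wt i ω + 1)|
          = |p i - (X i ω : ℝ)| * |f (Wt i ω + 1)| := abs_mul _ _
      _ ≤ (p i + 1) * C₀ := by
          refine mul_le_mul ?_ (hC₀ _) (abs_nonneg _) (by linarith [hp0 i])
          calc |p i - (X i ω : ℝ)| ≤ |p i| + |(X i ω : ℝ)| := abs_sub _ _
          _ ≤ p i + 1 := add_le_add (le_of_eq (abs_of_nonneg (hp0 i))) (hXb i ω)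
  have hCint : ∀ i, Integrable (Cc i) μ := by
    intro i
    refine hbdint _ ?_ (1 * (C₀ + C₀)) fun ω => ?_
    · exact ((meas_comp (hXmeas i) (fun k => (k:ℝ))).mul
        ((meas_comp (hWtmeas i) (fun k => f (k+1))).sub
          (meas_comp hWmeas f))).aestronglyMeasurable
    · calc |(X i ω : ℝ) * (f (Wt i ω + 1) - f (W ω))|
          = |(X i ω : ℝ)| * |f (Wt i ω + 1) - f (W ω)| := abs_mul _ _
      _ ≤ 1 * (C₀ + C₀) := by
          refine mul_le_mul (hXb i ω) ?_ (abs_nonneg _) zero_le_one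
          calc |f (Wt i ω + 1) - f (W ω)| ≤ |f (Wt i ω + 1)| + |f (W ω)| := abs_sub _ _
          _ ≤ C₀ + C₀ := add_le_add (hC₀ _) (hC₀ _)
  -- the Stein identity
  have key : (∫ ω, h (W ω) ∂μ) - m = ∑ i, ((∫ ω, A i ω ∂μ) + (∫ ω, B i ω ∂μ) + ∫ ω, Cc i ω ∂μ) := by
    have hhint : Integrable (fun ω => h (W ω)) μ :=
      hbdint _ (meas_comp hWmeas h).aestronglyMeasurable Ch fun ω => hCh _
    have h1 : (∫ ω, h (W ω) ∂μ) - m = ∫ ω, (h (W ω) - m) ∂μ := by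
      rw [integral_sub hhint (integrable_const m), integral_const]; simp
    have h2 : ∀ ω, h (W ω) - m = ∑ i, (A i ω + B i ω + Cc i ω) := by
      intro ω
      have hsum : ∀ i, A i ω + B i ω + Cc i ω
          = p i * f (W ω + 1) - (X i ω : ℝ) * f (W ω) := by
        intro i; simp only [hA_def, hB_def, hC_def]; ring
      have hWc : (W ω : ℝ) = ∑ i, (X i ω : ℝ) := by
        rw [hW]; push_cast; ring
      calc h (W ω) - m = l * f (W ω + 1) - (W ω : ℝ) * f (W ω) := (hf (W ω)).symm
      _ = (∑ i, p i) * f (W ω + 1) - (∑ i, (X i ω : ℝ)) * f (W ω) := by rw [hl, hWc]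
      _ = ∑ i, (p i * f (W ω + 1) - (X i ω : ℝ) * f (W ω)) := by
          rw [Finset.sum_mul, Finset.sum_mul, Finset.sum_sub_distrib]
      _ = ∑ i, (A i ω + B i ω + Cc i ω) := by
          exact Finset.sum_congr rfl fun i _ => (hsum i).symm
    rw [h1]
    calc ∫ ω, (h (W ω) - m) ∂μ = ∫ ω, ∑ i, (A i ω + B i ω + Cc i ω) ∂μ :=
        integral_congr_ae (ae_of_all _ h2)
    _ = ∑ i, ∫ ω, (A i ω + B i ω + Cc i ω) ∂μ :=
        integral_finset_sum _ fun i _ => ((hAint i).add (hBint i)).add (hCint i)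
    _ = ∑ i, ((∫ ω, A i ω ∂μ) + (∫ ω, B i ω ∂μ) + ∫ ω, Cc i ω ∂μ) := by
        refine Finset.sum_congr rfl fun i _ => ?_
        have e2 : (∫ ω, (A i + B i) ω ∂μ) = (∫ ω, A i ω ∂μ) + ∫ ω, B i ω ∂μ :=
          integral_add (hAint i) (hBint i)
        exact (integral_add ((hAint i).add (hBint i)) (hCint i)).trans (by rw [e2])
  -- bound on A
  have hAbd : ∀ i, |∫ ω, A i ω ∂μ| ≤ (p i ^ 2 + p i * (∫ ω, (Y i ω : ℝ) ∂μ)) * C₁ := by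
    intro i
    have hptw : ∀ ω, |A i ω| ≤ p i * (C₁ * ((X i ω : ℝ) + (Y i ω : ℝ))) := by
      intro ω
      have hnat : W ω + 1 = (Wt i ω + 1) + (X i ω + Y i ω) := by
        have := hdecomp i ω; omega
      have := step_bound f C₁ hC₁ (Wt i ω + 1) (X i ω + Y i ω)
      rw [← hnat] at this
      calc |A i ω| = p i * |f (W ω + 1) - f (Wt i ω + 1)| := by
            rw [hA_def]; rw [abs_mul, abs_of_nonneg (hp0 i)]
      _ ≤ p i * (C₁ * ((X i ω : ℝ) + (Y i ω : ℝ))) := by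
          refine mul_le_mul_of_nonneg_left ?_ (hp0 i)
          calc |f (W ω + 1) - f (Wt i ω + 1)| ≤ C₁ * ((X i ω + Y i ω : ℕ) : ℝ) := this
          _ = C₁ * ((X i ω : ℝ) + (Y i ω : ℝ)) := by push_cast; ring
    have hRint : Integrable (fun ω => p i * (C₁ * ((X i ω : ℝ) + (Y i ω : ℝ)))) μ :=
      (((hXint i).add (hYint i)).const_mul C₁).const_mul (p i)
    calc |∫ ω, A i ω ∂μ| ≤ ∫ ω, |A i ω| ∂μ := habs_le _
    _ ≤ ∫ ω, p i * (C₁ * ((X i ω : ℝ) + (Y i ω : ℝ))) ∂μ :=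
        integral_mono (hAint i).abs hRint hptw
    _ = p i * (C₁ * ((∫ ω, (X i ω : ℝ) ∂μ) + ∫ ω, (Y i ω : ℝ) ∂μ)) := by
        rw [integral_const_mul, integral_const_mul, integral_add (hXint i) (hYint i)]
    _ = (p i ^ 2 + p i * (∫ ω, (Y i ω : ℝ) ∂μ)) * C₁ := by rw [hEX i]; ring
  -- bound on Cc
  have hCbd : ∀ i, |∫ ω, Cc i ω ∂μ| ≤ (∫ ω, (X i ω : ℝ) * (Y i ω : ℝ) ∂μ) * C₁ := by
    intro i
    have hptw : ∀ ω, |Cc i ω| ≤ C₁ * ((X i ω : ℝ) * (Y i ω : ℝ)) := by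
      intro ω
      by_cases hx : X i ω = 0
      · simp [hC_def, hx]
      · have hx1 : X i ω = 1 := by have := h01 i ω; omega
        have hnat : W ω = (Wt i ω + 1) + Y i ω := by
          have := hdecomp i ω; omega
        have hsb := step_bound f C₁ hC₁ (Wt i ω + 1) (Y i ω)
        rw [← hnat] at hsb
        calc |Cc i ω| = |(X i ω : ℝ)| * |f (Wt i ω + 1) - f (W ω)| := by
              rw [hC_def]; exact abs_mul _ _
        _ = |f (W ω) - f (Wt i ω + 1)| := by rw [hx1, abs_sub_comm]; simp
        _ ≤ C₁ * (Y i ω : ℝ) := hsb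
        _ = C₁ * ((X i ω : ℝ) * (Y i ω : ℝ)) := by rw [hx1]; simp
    have hRint : Integrable (fun ω => C₁ * ((X i ω : ℝ) * (Y i ω : ℝ))) μ :=
      (hXYint i).const_mul C₁
    calc |∫ ω, Cc i ω ∂μ| ≤ ∫ ω, |Cc i ω| ∂μ := habs_le _
    _ ≤ ∫ ω, C₁ * ((X i ω : ℝ) * (Y i ω : ℝ)) ∂μ :=
        integral_mono (hCint i).abs hRint hptw
    _ = (∫ ω, (X i ω : ℝ) * (Y i ω : ℝ) ∂μ) * C₁ := by
        rw [integral_const_mul]; ring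
  -- bound on B via conditional expectation
  have hBbd : ∀ i, |∫ ω, B i ω ∂μ| ≤
      (∫ ω, |(μ[fun ω => (X i ω : ℝ)|MeasurableSpace.comap (Wt i) inferInstance]) ω - p i| ∂μ)
        * C₀ := by
    intro i
    have hmi := (hWtmeas i).comap_le
    have hWti : Measurable[MeasurableSpace.comap (Wt i) inferInstance] (Wt i) :=
      Measurable.of_comap_le le_rfl
    have hgSM : StronglyMeasurable[MeasurableSpace.comap (Wt i) inferInstance]
        (fun ω => f (Wt i ω + 1)) :=
      ((measurable_from_top (f := fun k : ℕ => f (k+1))).comp hWti).stronglyMeasurable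
    have hgX : Integrable ((fun ω => f (Wt i ω + 1)) * (fun ω => (X i ω : ℝ))) μ := by
      have : Integrable (fun ω => f (Wt i ω + 1) * (X i ω : ℝ)) μ := by
        refine hbdint _ ?_ C₀ fun ω => ?_
        · exact ((meas_comp (hWtmeas i) (fun k => f (k+1))).mul
            (meas_comp (hXmeas i) (fun k => (k:ℝ)))).aestronglyMeasurable
        · calc |f (Wt i ω + 1) * (X i ω : ℝ)| = |f (Wt i ω + 1)| * |(X i ω:ℝ)| := abs_mul _ _
          _ ≤ C₀ * 1 := mul_le_mul (hC₀ _) (hXb i ω) (abs_nonneg _) hC₀0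
          _ = C₀ := mul_one _
      exact this
    have hpull := condExp_mul_of_stronglyMeasurable_left (μ := μ) hgSM hgX (hXint i)
    have hXg : ∫ ω, (X i ω : ℝ) * f (Wt i ω + 1) ∂μ
        = ∫ ω, (μ[fun ω => (X i ω : ℝ)|MeasurableSpace.comap (Wt i) inferInstance]) ω
            * f (Wt i ω + 1) ∂μ := by
      calc ∫ ω, (X i ω : ℝ) * f (Wt i ω + 1) ∂μ
          = ∫ ω, ((fun ω => f (Wt i ω + 1)) * fun ω => (X i ω : ℝ)) ω ∂μ := by
            simp [mul_comm]
        _ = ∫ ω, (μ[(fun ω => f (Wt i ω + 1)) * fun ω => (X i ω : ℝ)|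
              MeasurableSpace.comap (Wt i) inferInstance]) ω ∂μ :=
            (integral_condExp (f := (fun ω => f (Wt i ω + 1)) * fun ω => (X i ω : ℝ)) hmi).symm
        _ = ∫ ω, ((fun ω => f (Wt i ω + 1)) *
              μ[fun ω => (X i ω : ℝ)|MeasurableSpace.comap (Wt i) inferInstance]) ω ∂μ :=
            integral_congr_ae hpull
        _ = _ := by simp [mul_comm]
    have hEint : Integrable (μ[fun ω => (X i ω : ℝ)|MeasurableSpace.comap (Wt i) inferInstance]) μ :=
      integrable_condExp
    have hEgint : Integrable (fun ω =>
        (p i - (μ[fun ω => (X i ω : ℝ)|MeasurableSpace.comap (Wt i) inferInstance]) ω)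
          * f (Wt i ω + 1)) μ := by
      have := Integrable.bdd_mul (c := C₀) ((integrable_const (p i)).sub hEint)
        (meas_comp (hWtmeas i) (fun k => f (k+1))).aestronglyMeasurable
        (ae_of_all _ fun ω => by simpa using hC₀ (Wt i ω + 1))
      simpa [Pi.sub_apply, mul_comm] using this
    have hBg : Integrable (fun ω => p i * f (Wt i ω + 1)) μ := by
      refine hbdint _ ?_ (|p i| * C₀) fun ω => ?_
      · exact (measurable_const.mul (meas_comp (hWtmeas i) (fun k => f (k+1)))).aestronglyMeasurable
      · rw [abs_mul]
        exact mul_le_mul_of_nonneg_left (hC₀ _) (abs_nonneg _)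
    have hXgint : Integrable (fun ω => (X i ω : ℝ) * f (Wt i ω + 1)) μ := by
      have := hgX; simpa [Pi.mul_def, mul_comm] using this
    have hswap : ∫ ω, B i ω ∂μ = ∫ ω,
        (p i - (μ[fun ω => (X i ω : ℝ)|MeasurableSpace.comap (Wt i) inferInstance]) ω)
          * f (Wt i ω + 1) ∂μ := by
      have e1 : ∫ ω, B i ω ∂μ = (∫ ω, p i * f (Wt i ω + 1) ∂μ)
          - ∫ ω, (X i ω : ℝ) * f (Wt i ω + 1) ∂μ := by
        rw [← integral_sub hBg hXgint]
        exact integral_congr_ae (ae_of_all _ fun ω => by simp [hB_def]; ring)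
      have hEg : Integrable (fun ω =>
          (μ[fun ω => (X i ω : ℝ)|MeasurableSpace.comap (Wt i) inferInstance]) ω
            * f (Wt i ω + 1)) μ := by
        have := Integrable.bdd_mul (c := C₀) hEint
          (meas_comp (hWtmeas i) (fun k => f (k+1))).aestronglyMeasurable
          (ae_of_all _ fun ω => by simpa using hC₀ (Wt i ω + 1))
        simpa [mul_comm] using this
      have e2 : ∫ ω,
          (p i - (μ[fun ω => (X i ω : ℝ)|MeasurableSpace.comap (Wt i) inferInstance]) ω)
            * f (Wt i ω + 1) ∂μ = (∫ ω, p i * f (Wt i ω + 1) ∂μ)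
          - ∫ ω, (μ[fun ω => (X i ω : ℝ)|MeasurableSpace.comap (Wt i) inferInstance]) ω
              * f (Wt i ω + 1) ∂μ := by
        rw [← integral_sub hBg hEg]
        exact integral_congr_ae (ae_of_all _ fun ω => by ring)
      rw [e1, e2, hXg]
    have habs : Integrable (fun ω =>
        |(μ[fun ω => (X i ω : ℝ)|MeasurableSpace.comap (Wt i) inferInstance]) ω - p i| * C₀) μ :=
      ((hEint.sub (integrable_const (p i))).abs).mul_const C₀
    rw [hswap]
    calc |∫ ω, (p i - (μ[fun ω => (X i ω : ℝ)|MeasurableSpace.comap (Wt i) inferInstance]) ω)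
          * f (Wt i ω + 1) ∂μ|
        ≤ ∫ ω, |(p i - (μ[fun ω => (X i ω : ℝ)|MeasurableSpace.comap (Wt i) inferInstance]) ω)
          * f (Wt i ω + 1)| ∂μ := habs_le _
      _ ≤ ∫ ω, |(μ[fun ω => (X i ω : ℝ)|MeasurableSpace.comap (Wt i) inferInstance]) ω - p i|
            * C₀ ∂μ := by
          refine integral_mono hEgint.abs habs fun ω => ?_
          rw [abs_mul, abs_sub_comm]
          exact mul_le_mul_of_nonneg_left (hC₀ _) (abs_nonneg _)
      _ = (∫ ω, |(μ[fun ω => (X i ω : ℝ)|MeasurableSpace.comap (Wt i) inferInstance]) ω - p i| ∂μ)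
            * C₀ := integral_mul_const _ _
  -- combine
  rw [key]
  calc |∑ i, ((∫ ω, A i ω ∂μ) + (∫ ω, B i ω ∂μ) + ∫ ω, Cc i ω ∂μ)|
      ≤ ∑ i, |(∫ ω, A i ω ∂μ) + (∫ ω, B i ω ∂μ) + ∫ ω, Cc i ω ∂μ| :=
        Finset.abs_sum_le_sum_abs _ _
    _ ≤ ∑ i, ((p i ^ 2 + p i * (∫ ω, (Y i ω : ℝ) ∂μ) +
          ∫ ω, (X i ω : ℝ) * (Y i ω : ℝ) ∂μ) * C₁ +
        (∫ ω, |(μ[fun ω => (X i ω : ℝ)|MeasurableSpace.comap (Wt i) inferInstance]) ω - p i| ∂μ)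
          * C₀) := by
        refine Finset.sum_le_sum fun i _ => ?_
        calc |(∫ ω, A i ω ∂μ) + (∫ ω, B i ω ∂μ) + ∫ ω, Cc i ω ∂μ|
            ≤ |(∫ ω, A i ω ∂μ) + ∫ ω, B i ω ∂μ| + |∫ ω, Cc i ω ∂μ| := abs_add_le _ _
          _ ≤ |∫ ω, A i ω ∂μ| + |∫ ω, B i ω ∂μ| + |∫ ω, Cc i ω ∂μ| :=
              add_le_add_left (abs_add_le _ _) _
          _ ≤ ((p i ^ 2 + p i * (∫ ω, (Y i ω : ℝ) ∂μ)) * C₁ +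
              (∫ ω, |(μ[fun ω => (X i ω : ℝ)|MeasurableSpace.comap (Wt i) inferInstance]) ω
                - p i| ∂μ) * C₀) + (∫ ω, (X i ω : ℝ) * (Y i ω : ℝ) ∂μ) * C₁ :=
              add_le_add (add_le_add (hAbd i) (hBbd i)) (hCbd i)
          _ = _ := by ring
    _ = _ := by
        rw [Finset.sum_add_distrib, ← Finset.sum_mul, ← Finset.sum_mul]
end
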